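/- Let x₀ ∈ ℂ and r > 0, and let μ be a positive Borel measure on the open disc D(x₀,r) with 0 < γ := μ(D(x₀,r)) < ∞. Define u(z) := ∫_{D(x₀,r)} log|ζ−z| dμ(ζ). Then for every z ∈ D(x₀,r): e^{−2u(z)} ≤ (1/γ) ∫_{D(x₀,r)} |ζ−z|^{−2γ} dμ(ζ), as an inequality in [0,+∞]. -/

import Mathlib

open MeasureTheory Filter Metric Topology
open scoped ENNReal NNReal BigOperators

noncomputable section

/-- The exponential function from `EReal` to `ℝ≥0∞`. -/
def eexp (x : EReal) : ℝ≥0∞ :=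
  if x = ⊤ then ⊤ else if x = ⊥ then 0 else ENNReal.ofReal (Real.exp x.toReal)

/-- The logarithmic potential `u(z) = ∫ log|z−ζ| dμ(ζ)` of a positive measure `μ` on `ℂ`,
with values in `EReal` (positive part minus negative part). -/
def logPot (μ : Measure ℂ) (z : ℂ) : EReal :=
  ((∫⁻ ζ, ENNReal.ofReal (Real.log (‖z - ζ‖)) ∂μ : ℝ≥0∞) : EReal)
    - ((∫⁻ ζ, ENNReal.ofReal (-Real.log (‖z - ζ‖)) ∂μ : ℝ≥0∞) : EReal)

/-- The closed square `P(x₀, 2r)` of edge `2r` centred at `x₀`, with sides parallel to the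
coordinate axes. -/
def cSquare (x₀ : ℂ) (r : ℝ) : Set ℂ :=
  {z : ℂ | |z.re - x₀.re| ≤ r ∧ |z.im - x₀.im| ≤ r}

end

/-- the paper's Lemma 2.2: Jensen-type bound for the exponential of the
negative logarithmic potential. -/
theorem expNegPotential_le (x₀ : ℂ) (r : ℝ) (hr : 0 < r) (μ : Measure ℂ)
    (hsupp : μ (Metric.ball x₀ r)ᶜ = 0)
    (hγfin : μ (Metric.ball x₀ r) ≠ ⊤)
    (hγpos : 0 < (μ (Metric.ball x₀ r)).toReal) :
    ∀ z ∈ Metric.ball x₀ r,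
      eexp (((-2 : ℝ) : EReal) * logPot μ z) ≤
        (ENNReal.ofReal ((μ (Metric.ball x₀ r)).toReal))⁻¹ *
          ∫⁻ ζ in Metric.ball x₀ r,
            (ENNReal.ofReal (‖ζ - z‖))
              ^ (-(2 * (μ (Metric.ball x₀ r)).toReal)) ∂μ := by
  intro z hz
  set s := Metric.ball x₀ r with hs
  set γ := (μ s).toReal with hγdef
  have hγne : γ ≠ 0 := ne_of_gt hγpos
  have hinv_ne_zero : (ENNReal.ofReal γ)⁻¹ ≠ 0 := by
    simp [ENNReal.inv_ne_zero]
  -- the integrand and its measurability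
  set f : ℂ → ℝ := fun ζ => Real.log (‖z - ζ‖) with hfdef
  have habs_cont : Continuous fun ζ : ℂ => ‖z - ζ‖ :=
    continuous_norm.comp (continuous_const.sub continuous_id)
  have hfm : Measurable f := Real.measurable_log.comp habs_cont.measurable
  set L : ℝ≥0∞ :=
    ∫⁻ ζ in s, (ENNReal.ofReal (‖ζ - z‖)) ^ (-(2 * γ)) ∂μ with hLdef
  by_cases hL : L = ⊤
  · rw [hL, ENNReal.mul_top hinv_ne_zero]
    exact le_top
  -- reduce full-space lintegrals to `s`
  have hfull : ∀ g : ℂ → ℝ≥0∞, ∫⁻ ζ, g ζ ∂μ = ∫⁻ ζ in s, g ζ ∂μ := by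
    intro g
    rw [← lintegral_add_compl g measurableSet_ball (μ := μ),
      Measure.restrict_eq_zero.mpr hsupp, lintegral_zero_measure, add_zero]
  -- the point z has zero mass
  have hzm : μ {z} = 0 := by
    by_contra h
    apply hL
    have hsub : {z} ⊆ s := Set.singleton_subset_iff.mpr hz
    have h1 : (∫⁻ ζ in {z}, (ENNReal.ofReal (‖ζ - z‖)) ^ (-(2 * γ)) ∂μ) ≤ L :=
      lintegral_mono_set hsub
    rw [lintegral_singleton] at h1
    simp only [sub_self, norm_zero, ENNReal.ofReal_zero] at h1
    rw [ENNReal.zero_rpow_of_neg (by nlinarith)] at h1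
    rw [ENNReal.top_mul h] at h1
    exact top_le_iff.mp h1
  have haene : ∀ᵐ ζ ∂(μ.restrict s), ζ ≠ z := by
    refine (ae_restrict_of_ae ?_)
    rw [ae_iff]
    simpa using hzm
  -- key pointwise identity off z
  have hkey : ∀ ζ : ℂ, ζ ≠ z →
      (ENNReal.ofReal (‖ζ - z‖)) ^ (-(2 * γ))
        = ENNReal.ofReal (Real.exp (-(2 * γ) * f ζ)) := by
    intro ζ hne
    have ht : 0 < ‖ζ - z‖ := by
      simpa [sub_eq_zero] using hne
    rw [ENNReal.ofReal_rpow_of_pos ht, Real.rpow_def_of_pos ht]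
    congr 2
    rw [hfdef]
    simp only []
    rw [show z - ζ = -(ζ - z) by ring, norm_neg]
    ring
  -- the negative part is finite
  set N : ℝ≥0∞ := ∫⁻ ζ, ENNReal.ofReal (-Real.log (‖z - ζ‖)) ∂μ with hNdef
  have hNfin : N ≠ ⊤ := by
    intro hN
    apply hL
    have hptwise : ∀ᵐ ζ ∂(μ.restrict s),
        ENNReal.ofReal (2 * γ) * ENNReal.ofReal (-Real.log (‖z - ζ‖))
          ≤ (ENNReal.ofReal (‖ζ - z‖)) ^ (-(2 * γ)) := by
      filter_upwards [haene] with ζ hne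
      rw [hkey ζ hne, ← ENNReal.ofReal_mul (by positivity)]
      apply ENNReal.ofReal_le_ofReal
      have := Real.add_one_le_exp (-(2 * γ) * f ζ)
      have h2 : 2 * γ * -Real.log (‖z - ζ‖) = -(2 * γ) * f ζ := by
        rw [hfdef]; ring
      linarith [Real.add_one_le_exp (-(2 * γ) * f ζ),
        (Real.exp_pos (-(2 * γ) * f ζ)).le]
    have hmeas : Measurable fun ζ : ℂ => ENNReal.ofReal (-Real.log (‖z - ζ‖)) :=
      ENNReal.measurable_ofReal.comp (Real.measurable_log.comp habs_cont.measurable).neg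
    have h3 : ENNReal.ofReal (2 * γ) * N ≤ L := by
      rw [hNdef, hfull, ← lintegral_const_mul _ hmeas]
      exact lintegral_mono_ae hptwise
    have h2γ : ENNReal.ofReal (2 * γ) ≠ 0 := by
      simp only [ne_eq, ENNReal.ofReal_eq_zero, not_le]; positivity
    rw [hN, ENNReal.mul_top h2γ] at h3
    exact top_le_iff.mp h3
  -- the positive part is finite
  set P : ℝ≥0∞ := ∫⁻ ζ, ENNReal.ofReal (Real.log (‖z - ζ‖)) ∂μ with hPdef
  have hPfin : P ≠ ⊤ := by
    have hb : ∀ ζ ∈ s, ENNReal.ofReal (Real.log (‖z - ζ‖))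
        ≤ ENNReal.ofReal (max (Real.log (2 * r)) 0) := by
      intro ζ hζ
      apply ENNReal.ofReal_le_ofReal
      rcases eq_or_lt_of_le (norm_nonneg (z - ζ)) with h0 | h0
      · rw [← h0, Real.log_zero]; exact le_max_right _ _
      · refine le_max_of_le_left (Real.log_le_log h0 ?_)
        have h1 : dist z x₀ < r := hz
        have h2 : dist ζ x₀ < r := hζ
        calc ‖z - ζ‖ = dist z ζ := (Complex.dist_eq z ζ).symm
          _ ≤ dist z x₀ + dist x₀ ζ := dist_triangle _ _ _
          _ ≤ 2 * r := by rw [dist_comm x₀ ζ]; linarith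
    rw [hPdef, hfull]
    have : ∫⁻ ζ in s, ENNReal.ofReal (Real.log (‖z - ζ‖)) ∂μ
        ≤ ∫⁻ _ in s, ENNReal.ofReal (max (Real.log (2 * r)) 0) ∂μ :=
      setLIntegral_mono' measurableSet_ball hb
    refine ne_top_of_le_ne_top ?_ this
    rw [setLIntegral_const]
    exact ENNReal.mul_ne_top ENNReal.ofReal_ne_top hγfin
  -- the restricted measure
  set ν := μ.restrict s with hνdef
  haveI : IsFiniteMeasure ν := ⟨by
    rw [hνdef, Measure.restrict_apply_univ]; exact hγfin.lt_top⟩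
  haveI : NeZero ν := ⟨by
    intro h
    have h0 : ν Set.univ = 0 := by rw [h]; rfl
    rw [hνdef, Measure.restrict_apply_univ] at h0
    rw [hγdef, h0] at hγpos
    simp at hγpos⟩
  have hνuniv : ν Set.univ = μ s := by rw [hνdef, Measure.restrict_apply_univ]
  -- integrability of f with respect to ν
  have habs : ∀ ζ, ENNReal.ofReal ‖f ζ‖ = ENNReal.ofReal (f ζ) + ENNReal.ofReal (-(f ζ)) := by
    intro ζ
    rw [Real.norm_eq_abs]
    rcases le_total 0 (f ζ) with h | h
    · rw [abs_of_nonneg h, ENNReal.ofReal_eq_zero.mpr (neg_nonpos.mpr h), add_zero]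
    · rw [abs_of_nonpos h, ENNReal.ofReal_eq_zero.mpr h, zero_add]
  have hfint : Integrable f ν := by
    refine ⟨hfm.aestronglyMeasurable, ?_⟩
    rw [hasFiniteIntegral_iff_norm]
    calc ∫⁻ ζ, ENNReal.ofReal ‖f ζ‖ ∂ν
        = ∫⁻ ζ, (ENNReal.ofReal (f ζ) + ENNReal.ofReal (-(f ζ))) ∂ν :=
          lintegral_congr fun ζ => habs ζ
      _ = (∫⁻ ζ, ENNReal.ofReal (f ζ) ∂ν) + ∫⁻ ζ, ENNReal.ofReal (-(f ζ)) ∂ν :=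
          lintegral_add_left (ENNReal.measurable_ofReal.comp hfm) _
      _ = P + N := by
          rw [hPdef, hNdef, hfull, hfull]
      _ < ⊤ := by
          exact ENNReal.add_lt_top.mpr ⟨hPfin.lt_top, hNfin.lt_top⟩
  have hPν : ∫⁻ ζ, ENNReal.ofReal (f ζ) ∂ν = P := by rw [hPdef, hfull]
  have hNν : ∫⁻ ζ, ENNReal.ofReal (-f ζ) ∂ν = N := by
    rw [hNdef, hfull]
  have hrep : ∫ ζ, f ζ ∂ν = P.toReal - N.toReal := by
    rw [integral_eq_lintegral_pos_part_sub_lintegral_neg_part hfint, hPν, hNν]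
  -- identify the logarithmic potential with the real integral
  have hlog : logPot μ z = ((∫ ζ, f ζ ∂ν : ℝ) : EReal) := by
    rw [logPot, hrep, EReal.coe_sub]
    rw [show ((P.toReal : ℝ) : EReal) = ((P : ℝ≥0∞) : EReal) by
      rw [← EReal.toReal_coe_ennreal]
      exact EReal.coe_toReal (by simpa using hPfin) (EReal.coe_ennreal_ne_bot _)]
    rw [show ((N.toReal : ℝ) : EReal) = ((N : ℝ≥0∞) : EReal) by
      rw [← EReal.toReal_coe_ennreal]
      exact EReal.coe_toReal (by simpa using hNfin) (EReal.coe_ennreal_ne_bot _)]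
  have heexp : eexp (((-2 : ℝ) : EReal) * logPot μ z)
      = ENNReal.ofReal (Real.exp (-2 * ∫ ζ, f ζ ∂ν)) := by
    rw [hlog, ← EReal.coe_mul, eexp]
    rw [if_neg (EReal.coe_ne_top _), if_neg (EReal.coe_ne_bot _), EReal.toReal_coe]
  -- Jensen's inequality with the function g
  set g : ℂ → ℝ := fun ζ => -(2 * γ) * f ζ with hgdef
  have hgint : Integrable g ν := hfint.const_mul _
  have hgexp_eq : ∫⁻ ζ, ENNReal.ofReal (Real.exp (g ζ)) ∂ν = L := by
    rw [hLdef, hνdef]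
    refine lintegral_congr_ae ?_
    filter_upwards [haene] with ζ hne
    exact (hkey ζ hne).symm
  have hgexpm : Measurable fun ζ => Real.exp (g ζ) :=
    Real.measurable_exp.comp (hfm.const_mul _)
  have hgexpint : Integrable (fun ζ => Real.exp (g ζ)) ν := by
    refine ⟨hgexpm.aestronglyMeasurable, ?_⟩
    rw [hasFiniteIntegral_iff_ofReal (ae_of_all _ fun ζ => (Real.exp_pos _).le),
      hgexp_eq]
    exact lt_top_iff_ne_top.mpr hL
  have hjensen := convexOn_exp.map_average_le Real.continuous_exp.continuousOn
    isClosed_univ (ae_of_all _ fun ζ : ℂ => Set.mem_univ (g ζ)) hgint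
    (by exact hgexpint : Integrable (Real.exp ∘ g) ν)
  rw [average_eq, average_eq, Measure.real, hνuniv, ← hγdef, smul_eq_mul, smul_eq_mul,
    integral_const_mul] at hjensen
  have havg : γ⁻¹ * (-(2 * γ) * ∫ ζ, f ζ ∂ν) = -2 * ∫ ζ, f ζ ∂ν := by
    field_simp
  rw [havg] at hjensen
  calc eexp (((-2 : ℝ) : EReal) * logPot μ z)
      = ENNReal.ofReal (Real.exp (-2 * ∫ ζ, f ζ ∂ν)) := heexp
    _ ≤ ENNReal.ofReal (γ⁻¹ * ∫ ζ, Real.exp (g ζ) ∂ν) :=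
        ENNReal.ofReal_le_ofReal hjensen
    _ = (ENNReal.ofReal γ)⁻¹ * L := by
        rw [ENNReal.ofReal_mul (by positivity), ENNReal.ofReal_inv_of_pos hγpos,
          ofReal_integral_eq_lintegral_ofReal hgexpint
            (ae_of_all _ fun ζ => (Real.exp_pos _).le), hgexp_eq]
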